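/- For k odd, let b(k) = 2^{k-1}/(k·C(k-1,(k-1)/2)), where C(n,r) is the binomial coefficient. Let f_χ(m) = tanh(β)·Σ_{S∈{-1,1}^k} (∏_j (1+S_j m)/2)·sgn(Σ_j S_j). If tanh(β) < b(k), then m > f_χ(m) for all m ∈ (0,1), f_χ(m) > m for all m ∈ (-1,0), and f_χ(0) = 0; in particular m = 0 is the unique fixed point of f_χ in (-1,1). -/

import Mathlib

/-- `pm b` maps a Boolean to the spin value ±1. -/
noncomputable def pm (b : Bool) : ℝ := if b then 1 else -1

/-- The magnetization map written as a binomial sum. -/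
noncomputable def Gmaj (n : ℕ) (m : ℝ) : ℝ :=
  ∑ t ∈ Finset.range (2*n+2), ((2*n+1).choose t : ℝ) * ((1+m)/2)^t * ((1-m)/2)^(2*n+1-t)
    * (if n < t then 1 else -1)

/-- The telescoping auxiliary function. -/
noncomputable def Btel (n : ℕ) (m : ℝ) (t : ℕ) : ℝ :=
  if t = 0 then 0 else
    (2*(n:ℝ)+1) * ((2*n).choose (t-1) : ℝ) * ((1+m)/2)^(t-1) * ((1-m)/2)^(2*n - (t-1))

lemma Btel_zero (n : ℕ) (m : ℝ) : Btel n m 0 = 0 := by simp [Btel]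

lemma Btel_succ (n : ℕ) (m : ℝ) (s : ℕ) :
    Btel n m (s+1) = (2*(n:ℝ)+1) * ((2*n).choose s : ℝ) * ((1+m)/2)^s * ((1-m)/2)^(2*n - s) := by
  simp only [Btel, if_neg (Nat.succ_ne_zero s), Nat.add_sub_cancel]

/-- Equivalence between Boolean functions and finsets. -/
def boolEquiv (α : Type*) [Fintype α] [DecidableEq α] : (α → Bool) ≃ Finset α where
  toFun S := Finset.univ.filter (fun j => S j)
  invFun A := fun j => decide (j ∈ A)
  left_inv S := by funext j; simp
  right_inv A := by ext j; simp

lemma sum_eq_G (n : ℕ) (m : ℝ) :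
    (∑ S : Fin (2*n+1) → Bool, (∏ j, (1 + pm (S j) * m) / 2) * Real.sign (∑ j, pm (S j)))
      = Gmaj n m := by
  classical
  have key : ∀ A : Finset (Fin (2*n+1)),
      (∏ j, (1 + pm (decide (j ∈ A)) * m) / 2) * Real.sign (∑ j, pm (decide (j ∈ A)))
      = ((1+m)/2)^A.card * ((1-m)/2)^(2*n+1 - A.card) * (if n < A.card then 1 else -1) := by
    intro A
    have hprod : (∏ j, (1 + pm (decide (j ∈ A)) * m) / 2)
        = ((1+m)/2)^A.card * ((1-m)/2)^(2*n+1 - A.card) := by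
      have : ∀ j : Fin (2*n+1), (1 + pm (decide (j ∈ A)) * m) / 2
          = if j ∈ A then (1+m)/2 else (1-m)/2 := by
        intro j; by_cases h : j ∈ A <;> simp [pm, h] <;> ring
      rw [Finset.prod_congr rfl (fun j _ => this j), Finset.prod_ite, Finset.prod_const,
        Finset.prod_const]
      congr 1
      · congr 1; simp
      · congr 1
        have : Finset.filter (fun j => ¬ j ∈ A) Finset.univ = Aᶜ := by
          ext j; simp
        rw [this, Finset.card_compl]
        simp
    have hcard : A.card ≤ 2*n+1 := by
      simpa using Finset.card_le_card (Finset.subset_univ A)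
    have hsum : (∑ j, pm (decide (j ∈ A))) = 2*(A.card:ℝ) - (2*n+1) := by
      have : ∀ j : Fin (2*n+1), pm (decide (j ∈ A)) = if j ∈ A then (1:ℝ) else -1 := by
        intro j; by_cases h : j ∈ A <;> simp [pm, h]
      rw [Finset.sum_congr rfl (fun j _ => this j), Finset.sum_ite, Finset.sum_const,
        Finset.sum_const]
      have h2 : Finset.filter (fun j => ¬ j ∈ A) Finset.univ = Aᶜ := by ext j; simp
      have h1 : Finset.filter (fun j => j ∈ A) Finset.univ = A := by ext j; simp
      rw [h1, h2, Finset.card_compl]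
      simp only [Fintype.card_fin, nsmul_eq_mul, mul_one, mul_neg]
      push_cast [Nat.cast_sub hcard]
      ring
    rw [hprod, hsum]
    congr 1
    by_cases h : n < A.card
    · rw [if_pos h, Real.sign_of_pos]
      have : (n:ℝ) + 1 ≤ (A.card : ℝ) := by exact_mod_cast h
      nlinarith
    · rw [if_neg h, Real.sign_of_neg]
      push_neg at h
      have : (A.card : ℝ) ≤ (n:ℝ) := by exact_mod_cast h
      nlinarith
  rw [← Equiv.sum_comp (boolEquiv (Fin (2*n+1))).symm]
  simp only [boolEquiv, Equiv.coe_fn_symm_mk]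
  rw [Finset.sum_congr rfl (fun A _ => key A)]
  rw [← Finset.powerset_univ, Finset.sum_powerset]
  have hcu : (Finset.univ : Finset (Fin (2*n+1))).card = 2*n+1 := by simp
  rw [hcu]
  unfold Gmaj
  apply Finset.sum_congr (by norm_num)
  intro t ht
  rw [Finset.sum_congr rfl (fun A hA => by
    rw [(Finset.mem_powersetCard.1 hA).2])]
  rw [Finset.sum_const, Finset.card_powersetCard, hcu, nsmul_eq_mul]
  ring

lemma G_hasDerivAt (n : ℕ) (m : ℝ) :
    HasDerivAt (Gmaj n)
      ((2*n+1 : ℝ) * ((2*n).choose n : ℝ) * ((1+m)/2)^n * ((1-m)/2)^n) m := by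
  classical
  have hterm : ∀ t ∈ Finset.range (2*n+2),
      HasDerivAt (fun x : ℝ => ((2*n+1).choose t : ℝ) * ((1+x)/2)^t * ((1-x)/2)^(2*n+1-t)
        * (if n < t then 1 else -1))
      ((if n < t then 1 else -1) * (1/2) * (Btel n m t - Btel n m (t+1))) m := by
    intro t ht
    rw [Finset.mem_range] at ht
    have hpD : HasDerivAt (fun x : ℝ => (1+x)/2) (1/2) m := by
      simpa using ((hasDerivAt_id m).const_add (1:ℝ)).div_const 2
    have hqD : HasDerivAt (fun x : ℝ => (1-x)/2) (-(1/2)) m := by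
      have := ((hasDerivAt_id m).const_sub (1:ℝ)).div_const 2
      exact this.congr_deriv (by norm_num)
    have h1 := ((hpD.pow t).const_mul ((2*n+1).choose t : ℝ)).mul (hqD.pow (2*n+1-t))
    have h2 := h1.mul_const (if n < t then (1:ℝ) else -1)
    refine h2.congr_deriv (Eq.symm ?_)
    simp only [Pi.pow_apply]
    rcases Nat.eq_zero_or_pos t with rfl | htpos
    · rw [Btel_zero, Btel_succ]
      simp only [Nat.choose_zero_right, Nat.cast_one, Nat.cast_zero, pow_zero,
        Nat.sub_zero, Nat.sub_self]
      rw [show 2*n+1-1 = 2*n from rfl]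
      push_cast
      ring
    · obtain ⟨s, rfl⟩ : ∃ s, t = s + 1 := ⟨t-1, by omega⟩
      have hs : s ≤ 2*n := by omega
      have h1n : (s+1) * (2*n+1).choose (s+1) = (2*n+1) * (2*n).choose s := by
        have := Nat.add_one_mul_choose_eq (2*n) s
        simpa [Nat.succ_eq_add_one, mul_comm] using this.symm
      have h1R : ((s:ℝ)+1) * ((2*n+1).choose (s+1) : ℝ)
          = (2*(n:ℝ)+1) * ((2*n).choose s : ℝ) := by exact_mod_cast h1n
      rw [Btel_succ, Btel_succ]
      rw [show s+1-1 = s from rfl, show 2*n+1-(s+1) = 2*n-s from by omega,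
        show 2*n-s-1 = 2*n-(s+1) from by omega]
      rcases Nat.lt_or_ge s (2*n) with hs2 | hs2
      · have h2n : (2*n - s) * (2*n+1).choose (s+1) = (2*n+1) * (2*n).choose (s+1) := by
          have hA := Nat.choose_succ_right_eq (2*n+1) (s+1)
          rw [show 2*n+1-(s+1) = 2*n - s from by omega] at hA
          have hBB := Nat.add_one_mul_choose_eq (2*n) (s+1)
          calc (2*n - s) * (2*n+1).choose (s+1) = (2*n+1).choose (s+1) * (2*n - s) := by ring
            _ = (2*n+1).choose (s+1+1) * (s+1+1) := hA.symm
            _ = (2*n).succ * (2*n).choose (s+1) := by rw [Nat.succ_eq_add_one, hBB]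
            _ = (2*n+1) * (2*n).choose (s+1) := by rfl
        have h2R : (2*(n:ℝ) - s) * ((2*n+1).choose (s+1) : ℝ)
            = (2*(n:ℝ)+1) * ((2*n).choose (s+1) : ℝ) := by
          have hc : (((2*n - s : ℕ)):ℝ) = 2*(n:ℝ) - s := by
            push_cast [Nat.cast_sub hs]; ring
          rw [← hc]; exact_mod_cast h2n
        have hc2 : (((2*n - s : ℕ)):ℝ) = 2*(n:ℝ) - s := by
          push_cast [Nat.cast_sub hs]; ring
        rw [hc2]
        rw [show 2*n - s = (2*n - (s+1)) + 1 from by omega, pow_succ]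
        push_cast
        linear_combination (-(if n < s+1 then (1:ℝ) else -1)) * (1/2) * ((1-m)/2)^(2*n-(s+1))
            * ((1-m)/2) * ((1+m)/2)^s * h1R
          + (if n < s+1 then (1:ℝ) else -1) * (1/2) * ((1+m)/2)^(s+1)
            * ((1-m)/2)^(2*n-(s+1)) * h2R
      · have hs3 : s = 2*n := by omega
        subst hs3
        rw [Nat.sub_self, show 2*n - (2*n+1) = 0 from by omega]
        rw [Nat.choose_succ_self, Nat.choose_self, Nat.choose_self, Nat.cast_zero]
        push_cast
        ring
  have hsum := HasDerivAt.fun_sum hterm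
  have key : (∑ t ∈ Finset.range (2*n+2),
      (if n < t then (1:ℝ) else -1) * (1/2) * (Btel n m t - Btel n m (t+1)))
      = (2*n+1 : ℝ) * ((2*n).choose n : ℝ) * ((1+m)/2)^n * ((1-m)/2)^n := by
    have hsplit : Finset.range (2*n+2) = Finset.Ico 0 (n+1) ∪ Finset.Ico (n+1) (2*n+2) := by
      rw [Finset.Ico_union_Ico_eq_Ico (by omega) (by omega), Finset.range_eq_Ico]
    rw [hsplit, Finset.sum_union (Finset.Ico_disjoint_Ico_consecutive 0 (n+1) (2*n+2))]
    have hlow : (∑ t ∈ Finset.Ico 0 (n+1),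
        (if n < t then (1:ℝ) else -1) * (1/2) * (Btel n m t - Btel n m (t+1)))
        = (1/2) * Btel n m (n+1) := by
      rw [← Finset.range_eq_Ico]
      have hc : (∑ t ∈ Finset.range (n+1),
          (if n < t then (1:ℝ) else -1) * (1/2) * (Btel n m t - Btel n m (t+1)))
          = ∑ t ∈ Finset.range (n+1), (1/2) * (Btel n m (t+1) - Btel n m t) := by
        refine Finset.sum_congr rfl fun t ht => ?_
        rw [Finset.mem_range] at ht
        rw [if_neg (by omega)]
        ring
      rw [hc, ← Finset.mul_sum, Finset.sum_range_sub (Btel n m), Btel_zero, sub_zero]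
    have hhigh : (∑ t ∈ Finset.Ico (n+1) (2*n+2),
        (if n < t then (1:ℝ) else -1) * (1/2) * (Btel n m t - Btel n m (t+1)))
        = (1/2) * Btel n m (n+1) := by
      rw [Finset.sum_Ico_eq_sum_range, show 2*n+2 - (n+1) = n+1 from by omega]
      have hc : (∑ t ∈ Finset.range (n+1),
          (if n < n+1+t then (1:ℝ) else -1) * (1/2) * (Btel n m (n+1+t) - Btel n m (n+1+t+1)))
          = ∑ t ∈ Finset.range (n+1), (1/2) * (Btel n m (n+1+t) - Btel n m (n+1+(t+1))) := by
        refine Finset.sum_congr rfl fun t ht => ?_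
        rw [if_pos (by omega), show n+1+(t+1) = n+1+t+1 from rfl]
        ring
      rw [hc, ← Finset.mul_sum,
        show (∑ t ∈ Finset.range (n+1), (Btel n m (n+1+t) - Btel n m (n+1+(t+1))))
          = Btel n m (n+1+0) - Btel n m (n+1+(n+1))
          from Finset.sum_range_sub' (fun i => Btel n m (n+1+i)) (n+1)]
      have hz : Btel n m (n+1+(n+1)) = 0 := by
        rw [show n+1+(n+1) = (2*n+1)+1 from by omega, Btel_succ,
          Nat.choose_succ_self, Nat.cast_zero]
        ring
      rw [hz, sub_zero, show n+1+0 = n+1 from rfl]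
    rw [hlow, hhigh, Btel_succ, show 2*n - n = n from by omega]
    push_cast
    ring
  rw [key] at hsum
  exact hsum

lemma G_odd (n : ℕ) (m : ℝ) : Gmaj n (-m) = - Gmaj n m := by
  unfold Gmaj
  simp only [show (1 + -m)/2 = (1-m)/2 from by ring, show (1 - -m)/2 = (1+m)/2 from by ring]
  have hrefl := Finset.sum_range_reflect
    (fun t => ((2*n+1).choose t : ℝ) * ((1-m)/2)^t * ((1+m)/2)^(2*n+1-t)
      * (if n < t then 1 else -1)) (2*n+2)
  rw [← hrefl, ← Finset.sum_neg_distrib]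
  refine Finset.sum_congr rfl fun t ht => ?_
  rw [Finset.mem_range] at ht
  have ht' : t ≤ 2*n+1 := by omega
  rw [show 2*n+2-1-t = 2*n+1-t from by omega]
  rw [Nat.choose_symm ht', show 2*n+1-(2*n+1-t) = t from by omega]
  rw [show (if n < 2*n+1-t then (1:ℝ) else -1) = -(if n < t then (1:ℝ) else -1) from by
    split_ifs with h1 h2 <;> first | (exfalso; omega) | norm_num]
  ring

lemma G_zero (n : ℕ) : Gmaj n 0 = 0 := by
  have := G_odd n 0
  rw [neg_zero] at this
  linarith

lemma G_bound (n : ℕ) (m : ℝ) (hm : m ∈ Set.Icc (0:ℝ) 1) :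
    (2:ℝ)^(2*n) / ((2*(n:ℝ)+1) * ((2*n).choose n : ℝ)) * Gmaj n m ≤ m := by
  set b0 : ℝ := (2:ℝ)^(2*n) / ((2*(n:ℝ)+1) * ((2*n).choose n : ℝ)) with hb0
  have hC : (0:ℝ) < ((2*n).choose n : ℝ) := by
    exact_mod_cast Nat.choose_pos (by omega : n ≤ 2*n)
  have hk : (0:ℝ) < 2*(n:ℝ)+1 := by positivity
  have hd : ∀ x : ℝ, HasDerivAt (fun y => y - b0 * Gmaj n y)
      (1 - b0 * ((2*n+1 : ℝ) * ((2*n).choose n : ℝ) * ((1+x)/2)^n * ((1-x)/2)^n)) x := by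
    intro x
    exact (hasDerivAt_id x).sub ((G_hasDerivAt n x).const_mul b0)
  have hdiff : Differentiable ℝ (fun y => y - b0 * Gmaj n y) := fun x => (hd x).differentiableAt
  have hmono : MonotoneOn (fun y => y - b0 * Gmaj n y) (Set.Icc 0 1) := by
    apply monotoneOn_of_deriv_nonneg (convex_Icc (0:ℝ) 1) hdiff.continuous.continuousOn
      hdiff.differentiableOn
    intro x hx
    rw [interior_Icc] at hx
    rw [(hd x).deriv]
    have key : b0 * ((2*n+1 : ℝ) * ((2*n).choose n : ℝ) * ((1+x)/2)^n * ((1-x)/2)^n)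
        = (1 - x^2)^n := by
      have hne : ((2*(n:ℝ)+1) * ((2*n).choose n : ℝ)) ≠ 0 := ne_of_gt (by positivity)
      calc b0 * ((2*n+1 : ℝ) * ((2*n).choose n : ℝ) * ((1+x)/2)^n * ((1-x)/2)^n)
          = 2^(2*n) * (((1+x)/2) * ((1-x)/2))^n
            * (((2*(n:ℝ)+1) * ((2*n).choose n : ℝ)) / ((2*(n:ℝ)+1) * ((2*n).choose n : ℝ))) := by
            rw [hb0, mul_pow]; push_cast; ring
        _ = 2^(2*n) * (((1+x)/2) * ((1-x)/2))^n := by rw [div_self hne, mul_one]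
        _ = 2^(2*n) * ((1-x^2)^n / 2^(2*n)) := by
            rw [show ((1+x)/2) * ((1-x)/2) = (1-x^2)/2^2 from by ring, div_pow, ← pow_mul]
        _ = (1 - x^2)^n := by
            rw [mul_comm, div_mul_cancel₀ _ (by positivity : ((2:ℝ)^(2*n)) ≠ 0)]
    rw [key]
    have h2 : (1 - x^2)^n ≤ 1 := by
      apply pow_le_one₀ (by nlinarith [hx.1, hx.2]) (by nlinarith [hx.1, hx.2])
    linarith
  have h0 : (0:ℝ) ∈ Set.Icc (0:ℝ) 1 := by constructor <;> norm_num
  have := hmono h0 hm hm.1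
  simp only [G_zero, mul_zero, sub_zero] at this
  linarith

/-- Proposition 1 (stability part): for odd `k`, if `tanh β < b(k)` then `m = 0` is the
unique fixed point of the majority magnetization map `f_χ` in `(-1,1)`, with
`m > f_χ(m)` on `(0,1)` and `f_χ(m) > m` on `(-1,0)`, and `f_χ(0) = 0`. -/
theorem stmt3 (k : ℕ) (hk : Odd k) (β : ℝ) (hβ : 0 < β)
    (b : ℝ)
    (hb : b = 2 ^ (k - 1) / ((k : ℝ) * (Nat.choose (k - 1) ((k - 1) / 2) : ℝ)))
    (fχ : ℝ → ℝ)
    (hf : ∀ m, fχ m = Real.tanh β *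
      ∑ S : Fin k → Bool, (∏ j, (1 + pm (S j) * m) / 2) * Real.sign (∑ j, pm (S j)))
    (ht : Real.tanh β < b) :
    (∀ m ∈ Set.Ioo (0:ℝ) 1, fχ m < m) ∧
    (∀ m ∈ Set.Ioo (-1:ℝ) 0, m < fχ m) ∧
    fχ 0 = 0 ∧
    (∀ m ∈ Set.Ioo (-1:ℝ) 1, (fχ m = m ↔ m = 0)) := by
  obtain ⟨n, hn⟩ := hk
  subst hn
  have hfG : ∀ m, fχ m = Real.tanh β * Gmaj n m := by
    intro m
    rw [hf m, sum_eq_G]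
  have hb' : b = (2:ℝ)^(2*n) / ((2*(n:ℝ)+1) * ((2*n).choose n : ℝ)) := by
    rw [hb, show 2*n+1-1 = 2*n from rfl, show (2*n)/2 = n from by omega]
    push_cast
    ring
  have htanh : 0 < Real.tanh β := by
    rw [Real.tanh_eq_sinh_div_cosh]
    exact div_pos (by exact Real.sinh_pos_iff.mpr hβ) (Real.cosh_pos β)
  have part1 : ∀ m ∈ Set.Ioo (0:ℝ) 1, fχ m < m := by
    intro m hm
    rw [hfG]
    rcases le_or_gt (Gmaj n m) 0 with hG | hG
    · have : Real.tanh β * Gmaj n m ≤ 0 := mul_nonpos_of_nonneg_of_nonpos htanh.le hG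
      linarith [hm.1]
    · have h1 : Real.tanh β * Gmaj n m < b * Gmaj n m := by
        exact mul_lt_mul_of_pos_right ht hG
      have h2 : b * Gmaj n m ≤ m := by
        rw [hb']
        exact G_bound n m ⟨hm.1.le, hm.2.le⟩
      linarith
  have part3 : fχ 0 = 0 := by rw [hfG, G_zero, mul_zero]
  have part2 : ∀ m ∈ Set.Ioo (-1:ℝ) 0, m < fχ m := by
    intro m hm
    have hm' : -m ∈ Set.Ioo (0:ℝ) 1 := ⟨by linarith [hm.2], by linarith [hm.1]⟩
    have := part1 (-m) hm'
    rw [hfG, G_odd] at this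
    rw [hfG]
    -- this : tanh β * - Gmaj n (-(-m))  ... careful
    nlinarith [this]
  refine ⟨part1, part2, part3, fun m hm => ⟨fun hfix => ?_, fun h0 => by rw [h0]; exact part3⟩⟩
  by_contra hne
  rcases lt_or_gt_of_ne hne with hneg | hpos
  · have := part2 m ⟨hm.1, hneg⟩
    linarith [hfix ▸ this]
  · have := part1 m ⟨hpos, hm.2⟩
    linarith [hfix ▸ this]
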